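/- arXiv:1508.05461 — 7 statements merged into one kernel-verified Lean document; each statement's English description precedes it below -/
import Mathlib

section
/- If A is a unimodular integer matrix (i.e., for every b in ZA ∩ R≥0A the polyhedron {x : Ax = b, x ≥ 0} has all integral vertices), then A is normal, i.e., ZA ∩ R≥0A = NA. -/
open Matrix

/-- Nonnegative real cone generated by the columns of `A`. -/
def MCone {ι κ : Type*} [Fintype κ] (A : Matrix ι κ ℝ) : Set (ι → ℝ) :=
  {b | ∃ x : κ → ℝ, (∀ j, 0 ≤ x j) ∧ A.mulVec x = b}

/-- Lattice (integer span) generated by the columns of `A`. -/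
def MZSpan {ι κ : Type*} [Fintype κ] (A : Matrix ι κ ℝ) : Set (ι → ℝ) :=
  {b | ∃ z : κ → ℤ, A.mulVec (fun j => (z j : ℝ)) = b}

/-- Affine semigroup (nonnegative integer span) generated by the columns of `A`. -/
def MNSpan {ι κ : Type*} [Fintype κ] (A : Matrix ι κ ℝ) : Set (ι → ℝ) :=
  {b | ∃ x : κ → ℕ, A.mulVec (fun j => (x j : ℝ)) = b}

/-- `A` is normal if `ℤA ∩ ℝ≥0 A = ℕ A`. -/
def MNormal {ι κ : Type*} [Fintype κ] (A : Matrix ι κ ℝ) : Prop :=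
  MZSpan A ∩ MCone A = MNSpan A

/-- The polyhedron `P_{A,b} = {x : Ax = b, x ≥ 0}`. -/
def MPoly {ι κ : Type*} [Fintype κ] (A : Matrix ι κ ℝ) (b : ι → ℝ) : Set (κ → ℝ) :=
  {x | (∀ j, 0 ≤ x j) ∧ A.mulVec x = b}

section Aux

variable {d n : ℕ}

/-- The negated sum-of-coordinates functional. -/
noncomputable def negSum (n : ℕ) : (Fin n → ℝ) →L[ℝ] ℝ :=
  LinearMap.toContinuousLinearMap (-(∑ j : Fin n, LinearMap.proj j))

lemma negSum_apply (x : Fin n → ℝ) : negSum n x = -∑ j, x j := by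
  simp [negSum]

lemma MPoly_isClosed (B : Matrix (Fin d) (Fin n) ℝ) (b : Fin d → ℝ) :
    IsClosed (MPoly B b) := by
  have h1 : IsClosed {x : Fin n → ℝ | ∀ j, 0 ≤ x j} := by
    have : {x : Fin n → ℝ | ∀ j, 0 ≤ x j} = ⋂ j, {x : Fin n → ℝ | 0 ≤ x j} := by
      ext x; simp
    rw [this]
    exact isClosed_iInter fun j => isClosed_le continuous_const (continuous_apply j)
  have h2 : IsClosed {x : Fin n → ℝ | B.mulVec x = b} := by
    have hc : Continuous fun x : Fin n → ℝ => B.mulVec x :=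
      (B.mulVecLin.continuous_of_finiteDimensional)
    exact isClosed_eq hc continuous_const
  exact h1.inter h2

lemma MPoly_convex (B : Matrix (Fin d) (Fin n) ℝ) (b : Fin d → ℝ) :
    Convex ℝ (MPoly B b) := by
  rintro x ⟨hx0, hxb⟩ y ⟨hy0, hyb⟩ s t hs ht hst
  constructor
  · intro j
    have := add_nonneg (mul_nonneg hs (hx0 j)) (mul_nonneg ht (hy0 j))
    simpa using this
  · have : B.mulVec (s • x + t • y) = s • B.mulVec x + t • B.mulVec y := by
      simp [Matrix.mulVec_add, Matrix.mulVec_smul]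
    rw [this, hxb, hyb]
    ext i
    simp [Pi.smul_apply, smul_eq_mul]
    linear_combination (b i) * hst

/-- A nonempty polyhedron `{x ≥ 0, Bx = b}` has an extreme point. -/
lemma MPoly_extremePoint (B : Matrix (Fin d) (Fin n) ℝ) (b : Fin d → ℝ)
    (hne : (MPoly B b).Nonempty) : (Set.extremePoints ℝ (MPoly B b)).Nonempty := by
  classical
  obtain ⟨x0, hx0⟩ := hne
  set P := MPoly B b with hP
  set c : ℝ := ∑ j, x0 j with hc
  have hc0 : 0 ≤ c := Finset.sum_nonneg fun j _ => hx0.1 j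
  set l := negSum n with hl
  -- the compact truncation
  set K : Set (Fin n → ℝ) := P ∩ {x | ∑ j, x j ≤ c} with hK
  have hx0K : x0 ∈ K := ⟨hx0, le_refl c⟩
  have hKclosed : IsClosed K :=
    (MPoly_isClosed B b).inter (isClosed_le (by continuity) continuous_const)
  have hbound : ∀ x ∈ K, ‖x‖ ≤ c := by
    rintro x ⟨hxP, hxc⟩
    rw [pi_norm_le_iff_of_nonneg hc0]
    intro j
    rw [Real.norm_eq_abs, abs_of_nonneg (hxP.1 j)]
    calc x j ≤ ∑ i, x i := Finset.single_le_sum (fun i _ => hxP.1 i) (Finset.mem_univ j)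
    _ ≤ c := hxc
  have hKcompact : IsCompact K := by
    rw [Metric.isCompact_iff_isClosed_bounded]
    exact ⟨hKclosed, (isBounded_iff_forall_norm_le).2 ⟨c, hbound⟩⟩
  -- maximize l over K
  obtain ⟨m, hmK, hmax⟩ := hKcompact.exists_isMaxOn ⟨x0, hx0K⟩ l.continuous.continuousOn
  -- m maximizes l over all of P
  have hmaxP : ∀ y ∈ P, l y ≤ l m := by
    intro y hyP
    by_contra hlt
    push_neg at hlt
    have hlm : l x0 ≤ l m := hmax hx0K
    have hyK : y ∈ K := by
      refine ⟨hyP, ?_⟩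
      have : l x0 < l y := lt_of_le_of_lt hlm hlt
      rw [negSum_apply, negSum_apply] at this
      have : ∑ j, y j < ∑ j, x0 j := by linarith
      exact le_of_lt this
    exact absurd (hmax hyK) (not_le.2 hlt)
  -- the exposed face
  set F : Set (Fin n → ℝ) := {x ∈ P | ∀ y ∈ P, l y ≤ l x} with hF
  have hFexposed : IsExposed ℝ P F := fun _ => ⟨l, rfl⟩
  have hFne : F.Nonempty := ⟨m, hmK.1, hmaxP⟩
  have hFK : F ⊆ K := by
    rintro x ⟨hxP, hxmax⟩
    refine ⟨hxP, ?_⟩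
    have := hxmax x0 hx0
    rw [negSum_apply, negSum_apply] at this
    show ∑ j, x j ≤ c
    rw [hc]
    linarith
  have hFclosed : IsClosed F := hFexposed.isClosed (MPoly_isClosed B b)
  have hFcompact : IsCompact F := hKcompact.of_isClosed_subset hFclosed hFK
  obtain ⟨e, he⟩ := hFcompact.extremePoints_nonempty hFne
  exact ⟨e, (hFexposed.isExtreme).extremePoints_subset_extremePoints he⟩

end Aux

/-- A unimodular integer matrix is normal. -/
theorem unimodular_implies_normal {d n : ℕ} (A : Matrix (Fin d) (Fin n) ℤ)
    (hA : ∀ b ∈ MZSpan (A.map ((↑) : ℤ → ℝ)) ∩ MCone (A.map ((↑) : ℤ → ℝ)),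
      ∀ x ∈ Set.extremePoints ℝ (MPoly (A.map ((↑) : ℤ → ℝ)) b), ∀ j, ∃ z : ℤ, x j = (z : ℝ)) :
    MNormal (A.map ((↑) : ℤ → ℝ)) := by
  set B := A.map ((↑) : ℤ → ℝ) with hB
  unfold MNormal
  apply Set.Subset.antisymm
  · rintro b ⟨hbZ, hbC⟩
    obtain ⟨x0, hx00, hx0b⟩ := hbC
    have hne : (MPoly B b).Nonempty := ⟨x0, hx00, hx0b⟩
    obtain ⟨e, he⟩ := MPoly_extremePoint B b hne
    have heP : e ∈ MPoly B b := he.1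
    have hint := hA b ⟨hbZ, ⟨x0, hx00, hx0b⟩⟩ e he
    choose z hz using hint
    refine ⟨fun j => (z j).toNat, ?_⟩
    have hzcast : (fun j => ((z j).toNat : ℝ)) = e := by
      funext j
      have h0 : 0 ≤ e j := heP.1 j
      rw [hz j] at h0
      have : (0 : ℤ) ≤ z j := by exact_mod_cast h0
      rw [hz j]
      exact_mod_cast congrArg (fun t : ℤ => (t : ℝ)) (Int.toNat_of_nonneg this)
    rw [hzcast]
    exact heP.2
  · rintro b ⟨x, hx⟩
    refine ⟨⟨fun j => (x j : ℤ), ?_⟩, ⟨fun j => (x j : ℝ), fun j => by positivity, hx⟩⟩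
    simpa using hx
end

section
/- Let B be a collection of 2^{n−1} binary n-tuples. Then any two distinct elements of B have Hamming distance at least 2 if and only if all elements of B have Hamming weight of the same parity. -/
/-- The Hamming weight of a binary tuple. -/
def hWeight {n : ℕ} (a : Fin n → Bool) : ℕ := (Finset.univ.filter fun i => a i = true).card

open Finset

lemma hammingDist_eq_card' {m : ℕ} (a b : Fin m → Bool) :
    hammingDist a b = (univ.filter fun i => a i ≠ b i).card := rfl

lemma parity_key {m : ℕ} (a b : Fin m → Bool) :
    hammingDist a b % 2 = (hWeight a + hWeight b) % 2 := by
  have key : ((hammingDist a b : ℕ) : ZMod 2) = ((hWeight a + hWeight b : ℕ) : ZMod 2) := by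
    rw [hammingDist_eq_card']
    unfold hWeight
    rw [Finset.card_filter, Finset.card_filter, Finset.card_filter]
    push_cast
    rw [← Finset.sum_add_distrib]
    apply Finset.sum_congr rfl
    intro i _
    cases ha : a i <;> cases hb : b i <;> simp [ha, hb] <;> decide
  have := (ZMod.natCast_eq_natCast_iff' _ _ _).mp key
  simpa using this

/-- For a collection `B` of `2^(n-1)` binary `n`-tuples, any two distinct elements of `B`
have Hamming distance at least `2` iff all elements of `B` have Hamming weight of the
same parity. -/
theorem hamming_parity {n : ℕ} (B : Finset (Fin (n + 1) → Bool)) (hB : B.card = 2 ^ n) :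
    (∀ a ∈ B, ∀ b ∈ B, a ≠ b → 2 ≤ hammingDist a b) ↔
      (∀ a ∈ B, ∀ b ∈ B, hWeight a % 2 = hWeight b % 2) := by
  constructor
  · intro h
    set π : (Fin (n+1) → Bool) → (Fin n → Bool) := fun a i => a (i.succ) with hπ
    have hinj : ∀ a ∈ B, ∀ b ∈ B, π a = π b → a = b := by
      intro a ha b hb hab
      by_contra hne
      have h2 := h a ha b hb hne
      have hsub : (univ.filter fun i => a i ≠ b i) ⊆ {0} := by
        intro i hi
        simp only [mem_filter, mem_univ, true_and] at hi
        simp only [mem_singleton]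
        by_contra h0
        obtain ⟨j, rfl⟩ := Fin.eq_succ_of_ne_zero h0
        exact hi (congrFun hab j)
      have hle : hammingDist a b ≤ 1 := by
        rw [hammingDist_eq_card']
        calc _ ≤ ({0} : Finset (Fin (n+1))).card := Finset.card_le_card hsub
          _ = 1 := rfl
      omega
    have hsurj : ∀ x : Fin n → Bool, ∃ c ∈ B, π c = x := by
      have himg : B.image π = univ := by
        apply Finset.eq_univ_of_card
        rw [Finset.card_image_of_injOn (fun a ha b hb => hinj a ha b hb), hB]
        simp
      intro x
      have : x ∈ B.image π := by rw [himg]; exact mem_univ x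
      simpa using this
    have hproj_le : ∀ a b : Fin (n+1) → Bool,
        hammingDist a b ≤ hammingDist (π a) (π b) + 1 := by
      intro a b
      rw [hammingDist_eq_card', hammingDist_eq_card']
      have hsub : (univ.filter fun i => a i ≠ b i) ⊆
          insert 0 ((univ.filter fun j : Fin n => π a j ≠ π b j).image Fin.succ) := by
        intro i hi
        simp only [mem_filter, mem_univ, true_and] at hi
        rcases eq_or_ne i 0 with rfl | h0
        · exact mem_insert_self _ _
        · obtain ⟨j, rfl⟩ := Fin.eq_succ_of_ne_zero h0
          exact mem_insert_of_mem (mem_image_of_mem _ (by simp [hπ, hi]))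
      calc (univ.filter fun i => a i ≠ b i).card ≤ _ := Finset.card_le_card hsub
        _ ≤ ((univ.filter fun j : Fin n => π a j ≠ π b j).image Fin.succ).card + 1 :=
            Finset.card_insert_le _ _
        _ ≤ _ := by
            have := Finset.card_image_le
              (s := univ.filter fun j : Fin n => π a j ≠ π b j) (f := Fin.succ)
            omega
    have hstep : ∀ a ∈ B, ∀ c ∈ B, hammingDist (π a) (π c) ≤ 1 →
        hWeight a % 2 = hWeight c % 2 := by
      intro a ha c hc hle
      rcases eq_or_ne a c with rfl | hne
      · rfl
      · have hge := h a ha c hc hne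
        have hle2 : hammingDist a c ≤ 2 := le_trans (hproj_le a c) (by omega)
        have hp := parity_key a c
        omega
    have main : ∀ k, ∀ a b, a ∈ B → b ∈ B → hammingDist (π a) (π b) = k →
        hWeight a % 2 = hWeight b % 2 := by
      intro k
      induction k using Nat.strong_induction_on with
      | _ k IH =>
        intro a b ha hb hk
        rcases Nat.eq_zero_or_pos k with rfl | hpos
        · have : π a = π b := eq_of_hammingDist_eq_zero hk
          rw [hinj a ha b hb this]
        · have hne : π a ≠ π b := by
            intro hh
            rw [hh, hammingDist_self] at hk
            omega
          obtain ⟨i, hi⟩ := Function.ne_iff.mp hne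
          obtain ⟨c, hc, hπc⟩ := hsurj (Function.update (π a) i (π b i))
          have h1 : hammingDist (π a) (π c) = 1 := by
            rw [hπc, hammingDist_eq_card', Finset.card_eq_one]
            refine ⟨i, ?_⟩
            ext j
            simp only [mem_filter, mem_univ, true_and, mem_singleton]
            by_cases hj : j = i
            · subst hj; simp [Function.update_self, hi]
            · simp [Function.update_of_ne hj, hj]
          have hpar1 : hWeight a % 2 = hWeight c % 2 := hstep a ha c hc (by omega)
          have h2 : hammingDist (π c) (π b) = k - 1 := by
            have hflt : (univ.filter fun j => π c j ≠ π b j)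
                = (univ.filter fun j => π a j ≠ π b j).erase i := by
              ext j
              simp only [mem_filter, mem_erase, mem_univ, true_and, hπc]
              by_cases hj : j = i
              · subst hj; simp [Function.update_self]
              · simp [Function.update_of_ne hj, hj]
            have : hammingDist (π c) (π b)
                = ((univ.filter fun j => π a j ≠ π b j).erase i).card := by
              rw [hammingDist_eq_card', hflt]
            rw [this, Finset.card_erase_of_mem (by simp [hi])]
            rw [hammingDist_eq_card'] at hk
            omega
          have hpar2 := IH (k-1) (by omega) c b hc hb h2
          omega
    intro a ha b hb
    exact main _ a b ha hb rfl
  · intro h a ha b hb hne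
    have hp := parity_key a b
    have hpos : 0 < hammingDist a b := hammingDist_pos.mpr hne
    have := h a ha b hb
    omega
end

section
/- Let A be a matrix of the form whose top row is (t_1,…,t_{n−1},t_n) with t_n > 0, whose remaining rows form a matrix (B | 0) with last column zero below the top row. If A is normal, then the matrix (0; B) obtained by replacing the top row with zeros and deleting the last column is normal. -/
open Matrix

/-- If `A` is normal, has top row `(t₁,…,tₙ)` with `tₙ > 0`, and the last column vanishes
below the top row, then the matrix obtained by replacing the top row by zeros and deleting
the last column is normal. -/
theorem normal_zero_top_row {d n : ℕ} (A : Matrix (Fin (d + 1)) (Fin (n + 1)) ℝ)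
    (hA : MNormal A)
    (htn : 0 < A 0 (Fin.last n))
    (hzero : ∀ i : Fin d, A i.succ (Fin.last n) = 0) :
    MNormal (Matrix.of fun (i : Fin (d + 1)) (j : Fin n) =>
      if i = 0 then 0 else A i j.castSucc) := by
  set A' : Matrix (Fin (d + 1)) (Fin n) ℝ :=
    Matrix.of fun (i : Fin (d + 1)) (j : Fin n) =>
      if i = 0 then 0 else A i j.castSucc with hA'def
  set t := A 0 (Fin.last n) with ht
  have hmul : ∀ (v : Fin n → ℝ) (i : Fin (d+1)),
      A'.mulVec v i = if i = 0 then 0 else ∑ j : Fin n, A i j.castSucc * v j := by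
    intro v i
    by_cases h : i = 0
    · simp [h, Matrix.mulVec, dotProduct, hA'def]
    · simp [h, Matrix.mulVec, dotProduct, hA'def]
  have hmulA : ∀ (v : Fin (n+1) → ℝ) (i : Fin (d+1)),
      A.mulVec v i = (∑ j : Fin n, A i j.castSucc * v j.castSucc)
        + A i (Fin.last n) * v (Fin.last n) := by
    intro v i
    simp [Matrix.mulVec, dotProduct, Fin.sum_univ_castSucc]
  apply Set.eq_of_subset_of_subset
  · rintro b ⟨⟨z, hz⟩, x, hx0, hx⟩
    have hb0 : b 0 = 0 := by
      have h := congrFun hz 0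
      rw [hmul] at h
      simpa using h.symm
    set Sx := ∑ j : Fin n, A 0 j.castSucc * (x j) with hSx
    set Sz := ∑ j : Fin n, A 0 j.castSucc * ((z j : ℝ)) with hSz
    obtain ⟨m, hm⟩ : ∃ m : ℤ, Sx - Sz ≤ t * m := by
      refine ⟨⌈(Sx - Sz)/t⌉, ?_⟩
      rw [← div_le_iff₀' htn]
      exact Int.le_ceil _
    set c := Sz + t * m with hc
    have hcx : Sx ≤ c := by linarith
    set btil : Fin (d+1) → ℝ := fun i => if i = 0 then c else b i with hbtil
    have hbZ : btil ∈ MZSpan A := by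
      refine ⟨Fin.snoc z m, ?_⟩
      funext i
      rw [hmulA]
      by_cases h : i = 0
      · subst h
        simp [hbtil, hc, hSz]
        exact Or.inl ht.symm
      · obtain ⟨i', rfl⟩ := Fin.exists_succ_eq.mpr h
        have hz' := congrFun hz i'.succ
        rw [hmul, if_neg h] at hz'
        simp [hbtil, h, hzero i', hz']
    have hbC : btil ∈ MCone A := by
      refine ⟨Fin.snoc x ((c - Sx)/t), ?_, ?_⟩
      · intro j
        refine Fin.lastCases ?_ ?_ j
        · simpa using div_nonneg (by linarith) htn.le
        · intro j'; simpa using hx0 j'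
      · funext i
        rw [hmulA]
        by_cases h : i = 0
        · subst h
          have hts : t * ((c - Sx) / t) = c - Sx := by
            field_simp
          simp only [Fin.snoc_castSucc, Fin.snoc_last, ← ht]
          rw [hts, ← hSx]
          simp [hbtil]
        · obtain ⟨i', rfl⟩ := Fin.exists_succ_eq.mpr h
          have hx' := congrFun hx i'.succ
          rw [hmul, if_neg h] at hx'
          simp [hbtil, h, hzero i', hx']
    have hN : btil ∈ MNSpan A := by
      rw [MNormal] at hA
      rw [← hA]
      exact ⟨hbZ, hbC⟩
    obtain ⟨ν, hν⟩ := hN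
    refine ⟨fun j => ν j.castSucc, ?_⟩
    funext i
    rw [hmul]
    by_cases h : i = 0
    · simp [h, hb0]
    · obtain ⟨i', rfl⟩ := Fin.exists_succ_eq.mpr h
      have hν' := congrFun hν i'.succ
      rw [hmulA] at hν'
      rw [hzero i'] at hν'
      simp only [zero_mul, add_zero] at hν'
      simp [h, hν', hbtil]
  · rintro b ⟨x, hx⟩
    refine ⟨⟨fun j => (x j : ℤ), ?_⟩, ⟨fun j => (x j : ℝ), fun j => by positivity, hx⟩⟩
    convert hx using 2
    exact funext fun j => by simp
end

section
/- If a simplicial complex C of Lawrence type Λ(C') (i.e., containing a facet with all but one vertex) has a normal binary hierarchical matrix A_{Λ(C')}, then A_{Λ(C')} is unimodular; equivalently, for matrices of Lawrence type, normality is equivalent to unimodularity. -/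
open Matrix

/-- `A` is unimodular if for each `b ∈ ℤA ∩ ℝ≥0 A`, every vertex (extreme point)
of `P_{A,b}` is integral. -/
def MUnimodular {ι κ : Type*} [Fintype κ] (A : Matrix ι κ ℝ) : Prop :=
  ∀ b ∈ MZSpan A ∩ MCone A, ∀ x ∈ Set.extremePoints ℝ (MPoly A b), ∀ j, ∃ z : ℤ, x j = (z : ℝ)

/-- The Lawrence lifting `Λ(A) = [[A,0],[0,A],[I,I]]` of an integer matrix. -/
def lawrenceLift {s t : ℕ} (A : Matrix (Fin s) (Fin t) ℤ) :
    Matrix ((Fin s ⊕ Fin s) ⊕ Fin t) (Fin t ⊕ Fin t) ℝ :=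
  Matrix.of fun i j =>
    match i, j with
    | Sum.inl (Sum.inl i), Sum.inl j => (A i j : ℝ)
    | Sum.inl (Sum.inl _), Sum.inr _ => 0
    | Sum.inl (Sum.inr _), Sum.inl _ => 0
    | Sum.inl (Sum.inr i), Sum.inr j => (A i j : ℝ)
    | Sum.inr i, Sum.inl j => if i = j then 1 else 0
    | Sum.inr i, Sum.inr j => if i = j then 1 else 0

section Helpers
open Sum
variable {s t : ℕ} (A : Matrix (Fin s) (Fin t) ℤ)

lemma lift_mv_ll (x : Fin t ⊕ Fin t → ℝ) (i : Fin s) :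
    (lawrenceLift A).mulVec x (inl (inl i)) = ∑ j, (A i j : ℝ) * x (inl j) := by
  simp [lawrenceLift, Matrix.mulVec, dotProduct, Fintype.sum_sum_type]

lemma lift_mv_lr (x : Fin t ⊕ Fin t → ℝ) (i : Fin s) :
    (lawrenceLift A).mulVec x (inl (inr i)) = ∑ j, (A i j : ℝ) * x (inr j) := by
  simp [lawrenceLift, Matrix.mulVec, dotProduct, Fintype.sum_sum_type]

lemma lift_mv_r (x : Fin t ⊕ Fin t → ℝ) (i : Fin t) :
    (lawrenceLift A).mulVec x (inr i) = x (inl i) + x (inr i) := by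
  simp [lawrenceLift, Matrix.mulVec, dotProduct, Fintype.sum_sum_type, ite_mul,
    Finset.sum_ite_eq]

lemma extreme_perturb {E : Type*} [AddCommGroup E] [Module ℝ E] {S : Set E} {x d : E}
    (hx : x ∈ Set.extremePoints ℝ S) (h1 : x + d ∈ S) (h2 : x - d ∈ S) : d = 0 := by
  have h := (hx.2 h1 h2 ⟨1/2, 1/2, by norm_num, by norm_num, by norm_num, by module⟩)
  have : d = (x + d) - x := by abel
  rw [this, h, sub_self]


lemma mpoly_compact (b : (Fin s ⊕ Fin s) ⊕ Fin t → ℝ) :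
    IsCompact (MPoly (lawrenceLift A) b) := by
  have hclosed : IsClosed (MPoly (lawrenceLift A) b) := by
    have h1 : IsClosed {x : Fin t ⊕ Fin t → ℝ | ∀ j, 0 ≤ x j} := by
      have : {x : Fin t ⊕ Fin t → ℝ | ∀ j, 0 ≤ x j} = ⋂ j, {x | 0 ≤ x j} := by
        ext x; simp [Set.mem_iInter]
      rw [this]
      exact isClosed_iInter fun j => isClosed_le continuous_const (continuous_apply j)
    have h2 : IsClosed {x : Fin t ⊕ Fin t → ℝ | (lawrenceLift A).mulVec x = b} := by
      have hc : Continuous fun x : Fin t ⊕ Fin t → ℝ => (lawrenceLift A).mulVec x :=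
        LinearMap.continuous_of_finiteDimensional ((lawrenceLift A).mulVecLin)
      exact isClosed_eq hc continuous_const
    exact h1.inter h2
  have hsub : MPoly (lawrenceLift A) b ⊆
      Set.Icc (0 : Fin t ⊕ Fin t → ℝ) (Sum.elim (fun j => b (inr j)) (fun j => b (inr j))) := by
    rintro x ⟨hpos, heq⟩
    constructor
    · intro j; exact hpos j
    · intro j
      cases j with
      | inl j =>
        have := hpos (inr j)
        simp only [Sum.elim_inl]
        have hr : x (inl j) + x (inr j) = b (inr j) := by
          rw [← lift_mv_r A x]; exact congrFun heq _
        linarith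
      | inr j =>
        have := hpos (inl j)
        simp only [Sum.elim_inr]
        have hr : x (inl j) + x (inr j) = b (inr j) := by
          rw [← lift_mv_r A x]; exact congrFun heq _
        linarith
  exact (isCompact_Icc).of_isClosed_subset hclosed hsub

lemma unimod_to_normal (hU : MUnimodular (lawrenceLift A)) : MNormal (lawrenceLift A) := by
  ext b; constructor
  · rintro ⟨⟨z, hz⟩, ⟨w, hw0, hw⟩⟩
    have hne : (MPoly (lawrenceLift A) b).Nonempty := ⟨w, hw0, hw⟩
    obtain ⟨x, hx⟩ := (mpoly_compact A b).extremePoints_nonempty hne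
    have hint := hU b ⟨⟨z, hz⟩, ⟨w, hw0, hw⟩⟩ x hx
    choose zz hzz using hint
    refine ⟨fun j => (zz j).toNat, ?_⟩
    have hxz : (fun j => ((zz j).toNat : ℝ)) = x := by
      funext j
      have h0 : (0:ℝ) ≤ zz j := by rw [← hzz j]; exact hx.1.1 j
      have : (0:ℤ) ≤ zz j := by exact_mod_cast h0
      rw [hzz j]; exact_mod_cast Int.toNat_of_nonneg this
    rw [hxz]; exact hx.1.2
  · rintro ⟨n, hn⟩
    refine ⟨⟨fun j => (n j : ℤ), ?_⟩, ⟨fun j => (n j : ℝ), fun j => by positivity, hn⟩⟩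
    have he : (fun j => ((n j : ℤ) : ℝ)) = fun j => (n j : ℝ) := by push_cast; rfl
    rw [he]; exact hn

lemma normal_to_unimod (hN : MNormal (lawrenceLift A)) : MUnimodular (lawrenceLift A) := by
  rintro b ⟨⟨z, hz⟩, hbC⟩ x hx jj
  obtain ⟨hpos, heq⟩ := hx.1
  -- names for the two halves of x
  have hufloor : ∀ j : Fin t, (0:ℤ) ≤ ⌊x (inl j)⌋ := fun j => Int.floor_nonneg.mpr (hpos (inl j))
  have hvfloor : ∀ j : Fin t, (0:ℤ) ≤ ⌊x (inr j)⌋ := fun j => Int.floor_nonneg.mpr (hpos (inr j))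
  set fl : Fin t ⊕ Fin t → ℤ := Sum.elim (fun j => ⌊x (inl j)⌋) (fun j => ⌊x (inr j)⌋) with hfl
  set xf : Fin t ⊕ Fin t → ℝ := fun j => x j - (fl j : ℝ) with hxf
  have hxf0 : ∀ j, 0 ≤ xf j := by
    intro j
    cases j with
    | inl j => simp only [hxf, hfl, Sum.elim_inl, sub_nonneg]; exact Int.floor_le _
    | inr j => simp only [hxf, hfl, Sum.elim_inr, sub_nonneg]; exact Int.floor_le _
  have hxf1 : ∀ j, xf j < 1 := by
    intro j
    cases j with
    | inl j =>
      simp only [hxf, hfl, Sum.elim_inl]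
      linarith [Int.lt_floor_add_one (x (inl j))]
    | inr j =>
      simp only [hxf, hfl, Sum.elim_inr]
      linarith [Int.lt_floor_add_one (x (inr j))]
  have hxfsub : xf = x - (fun j => (fl j : ℝ)) := rfl
  set b' : (Fin s ⊕ Fin s) ⊕ Fin t → ℝ := b - (lawrenceLift A).mulVec (fun j => (fl j : ℝ))
    with hb'
  have hmvxf : (lawrenceLift A).mulVec xf = b' := by
    rw [hxfsub, Matrix.mulVec_sub, heq]
  have hb'Z : b' ∈ MZSpan (lawrenceLift A) := by
    refine ⟨fun j => z j - fl j, ?_⟩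
    have : (fun j => ((z j - fl j : ℤ) : ℝ)) = (fun j => (z j : ℝ)) - (fun j => (fl j : ℝ)) := by
      funext j; push_cast; rfl
    rw [this, Matrix.mulVec_sub, hz, hb']
  have hb'C : b' ∈ MCone (lawrenceLift A) := ⟨xf, hxf0, hmvxf⟩
  have hb'N : b' ∈ MNSpan (lawrenceLift A) := by
    rw [← hN]; exact ⟨hb'Z, hb'C⟩
  obtain ⟨pq, hpq⟩ := hb'N
  have hkey : (lawrenceLift A).mulVec (fun j => (pq j : ℝ)) = (lawrenceLift A).mulVec xf := by
    rw [hpq, hmvxf]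
  have hrow : ∀ i : Fin t, (pq (inl i) : ℝ) + (pq (inr i) : ℝ) = xf (inl i) + xf (inr i) := by
    intro i
    have h := congrFun hkey (inr i)
    rwa [lift_mv_r, lift_mv_r] at h
  have hAeq : ∀ i : Fin s,
      ∑ j, (A i j : ℝ) * (pq (inl j) : ℝ) = ∑ j, (A i j : ℝ) * xf (inl j) := by
    intro i
    have h := congrFun hkey (inl (inl i))
    rwa [lift_mv_ll, lift_mv_ll] at h
  set lam : Fin t → ℝ := fun j => xf (inl j) - (pq (inl j) : ℝ) with hlam
  have hker : ∀ i : Fin s, ∑ j, (A i j : ℝ) * lam j = 0 := by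
    intro i
    have : ∑ j, (A i j : ℝ) * lam j
        = ∑ j, (A i j : ℝ) * xf (inl j) - ∑ j, (A i j : ℝ) * (pq (inl j) : ℝ) := by
      rw [← Finset.sum_sub_distrib]
      exact Finset.sum_congr rfl fun j _ => by rw [hlam]; ring
    rw [this, hAeq i, sub_self]
  -- the sum pq (inl j) + pq (inr j) is 0 or 1
  have hpqle : ∀ j : Fin t, pq (inl j) + pq (inr j) ≤ 1 := by
    intro j
    have h2 : ((pq (inl j) + pq (inr j) : ℕ) : ℝ) < 2 := by
      push_cast
      linarith [hrow j, hxf1 (inl j), hxf1 (inr j)]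
    have : pq (inl j) + pq (inr j) < 2 := by exact_mod_cast h2
    omega
  have hsupp : ∀ j : Fin t, lam j ≠ 0 → 0 < x (inl j) ∧ 0 < x (inr j) := by
    intro j hj
    have hfu0 := hxf0 (inl j)
    have hfu1 := hxf1 (inl j)
    have hfv0 := hxf0 (inr j)
    have hfv1 := hxf1 (inr j)
    have hs := hrow j
    by_cases hz0 : xf (inl j) = 0
    · exfalso
      have hp : pq (inl j) ≠ 0 := by
        intro h0; apply hj
        show xf (inl j) - (pq (inl j) : ℝ) = 0
        rw [hz0, h0]; simp
      have h1 : ((pq (inl j) + pq (inr j) : ℕ) : ℝ) < 1 := by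
        push_cast; rw [hz0] at hs; linarith
      have : pq (inl j) + pq (inr j) < 1 := by exact_mod_cast h1
      omega
    · have hfu' : 0 < xf (inl j) := lt_of_le_of_ne hfu0 (Ne.symm hz0)
      constructor
      · have : xf (inl j) ≤ x (inl j) := by
          simp only [hxf, hfl, Sum.elim_inl]
          have := hufloor j
          have : (0:ℝ) ≤ (⌊x (inl j)⌋ : ℝ) := by exact_mod_cast this
          linarith
        linarith
      · have h1 : (1:ℝ) ≤ (pq (inl j) : ℝ) + (pq (inr j) : ℝ) := by
          have hpos1 : 0 < pq (inl j) + pq (inr j) := by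
            by_contra h
            push_neg at h
            interval_cases h' : pq (inl j) + pq (inr j)
            all_goals
              have hl : pq (inl j) = 0 := by omega
              have hr : pq (inr j) = 0 := by omega
              rw [hl, hr] at hs
              simp at hs
              linarith
          have : 1 ≤ pq (inl j) + pq (inr j) := hpos1
          have := (Nat.one_le_cast (α := ℝ)).mpr this
          push_cast at this ⊢
          linarith
        have hfv' : 0 < xf (inr j) := by linarith
        have : xf (inr j) ≤ x (inr j) := by
          simp only [hxf, hfl, Sum.elim_inr]
          have := hvfloor j
          have : (0:ℝ) ≤ (⌊x (inr j)⌋ : ℝ) := by exact_mod_cast this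
          linarith
        linarith
  -- lam must vanish, by extremality
  have hlam0 : lam = 0 := by
    by_contra hne
    obtain ⟨j0, hj0⟩ := Function.ne_iff.mp hne
    have hj0' : lam j0 ≠ 0 := hj0
    set S : Finset (Fin t) := Finset.univ.filter (fun j => lam j ≠ 0) with hS
    have hSne : S.Nonempty := ⟨j0, by simp [hS, hj0']⟩
    set ε : ℝ := S.inf' hSne (fun j => min (x (inl j)) (x (inr j)) / |lam j|) with hε
    have hεpos : 0 < ε := by
      rw [hε, Finset.lt_inf'_iff]
      intro j hjS
      have hjne : lam j ≠ 0 := by simpa [hS] using hjS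
      obtain ⟨h1, h2⟩ := hsupp j hjne
      exact div_pos (lt_min h1 h2) (abs_pos.mpr hjne)
    have hbound : ∀ j : Fin t, lam j ≠ 0 →
        ε * |lam j| ≤ min (x (inl j)) (x (inr j)) := by
      intro j hjne
      have hjS : j ∈ S := by simp [hS, hjne]
      have hle := Finset.inf'_le (fun j => min (x (inl j)) (x (inr j)) / |lam j|) hjS
      rw [← hε] at hle
      have habs : 0 < |lam j| := abs_pos.mpr hjne
      calc ε * |lam j| ≤ (min (x (inl j)) (x (inr j)) / |lam j|) * |lam j| := by
            exact mul_le_mul_of_nonneg_right hle (le_of_lt habs)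
        _ = min (x (inl j)) (x (inr j)) := by field_simp
    have habsle : ∀ j : Fin t, |ε * lam j| ≤ min (x (inl j)) (x (inr j)) ∨ lam j = 0 := by
      intro j
      by_cases hjne : lam j = 0
      · exact Or.inr hjne
      · left
        rw [abs_mul, abs_of_pos hεpos]
        exact hbound j hjne
    set d : Fin t ⊕ Fin t → ℝ := Sum.elim (fun j => ε * lam j) (fun j => -(ε * lam j)) with hd
    have hmvd : (lawrenceLift A).mulVec d = 0 := by
      funext i
      match i with
      | inl (inl i) =>
        rw [lift_mv_ll]
        have : ∑ j, (A i j : ℝ) * d (inl j) = ε * ∑ j, (A i j : ℝ) * lam j := by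
          rw [Finset.mul_sum]
          exact Finset.sum_congr rfl fun j _ => by simp [hd]; ring
        rw [this, hker i, mul_zero]; rfl
      | inl (inr i) =>
        rw [lift_mv_lr]
        have : ∑ j, (A i j : ℝ) * d (inr j) = -(ε * ∑ j, (A i j : ℝ) * lam j) := by
          rw [Finset.mul_sum, ← Finset.sum_neg_distrib]
          exact Finset.sum_congr rfl fun j _ => by simp [hd]; ring
        rw [this, hker i, mul_zero, neg_zero]; rfl
      | inr i =>
        rw [lift_mv_r]
        simp [hd]
    have hmem : ∀ (sg : ℝ), sg = 1 ∨ sg = -1 → x + sg • d ∈ MPoly (lawrenceLift A) b := by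
      intro sg hsg
      constructor
      · intro j
        cases j with
        | inl j =>
          rcases habsle j with h | h
          · have h1 : |sg * (ε * lam j)| ≤ x (inl j) := by
              have hsg1 : |sg| = 1 := by rcases hsg with rfl | rfl <;> simp
              rw [abs_mul, hsg1, one_mul]
              exact le_trans h (min_le_left _ _)
            have := neg_abs_le (sg * (ε * lam j))
            simp only [Pi.add_apply, Pi.smul_apply, hd, Sum.elim_inl, smul_eq_mul]
            linarith
          · simp [hd, h, hpos (inl j)]
        | inr j =>
          rcases habsle j with h | h
          · have h1 : |sg * (-(ε * lam j))| ≤ x (inr j) := by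
              have hsg1 : |sg| = 1 := by rcases hsg with rfl | rfl <;> simp
              rw [abs_mul, hsg1, one_mul, abs_neg]
              exact le_trans h (min_le_right _ _)
            have := neg_abs_le (sg * (-(ε * lam j)))
            simp only [Pi.add_apply, Pi.smul_apply, hd, Sum.elim_inr, smul_eq_mul]
            linarith
          · simp [hd, h, hpos (inr j)]
      · rw [Matrix.mulVec_add, heq, Matrix.mulVec_smul, hmvd, smul_zero, add_zero]
    have h1 : x + d ∈ MPoly (lawrenceLift A) b := by
      have := hmem 1 (Or.inl rfl); rwa [one_smul] at this
    have h2 : x - d ∈ MPoly (lawrenceLift A) b := by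
      have := hmem (-1) (Or.inr rfl); rwa [neg_one_smul, ← sub_eq_add_neg] at this
    have hd0 := extreme_perturb hx h1 h2
    have : ε * lam j0 = 0 := by
      have := congrFun hd0 (inl j0)
      simpa [hd] using this
    rcases mul_eq_zero.mp this with h | h
    · exact absurd h (ne_of_gt hεpos)
    · exact hj0' h
  -- now conclude integrality
  have hxl : ∀ j : Fin t, xf (inl j) = 0 := by
    intro j
    have hl : lam j = 0 := congrFun hlam0 j
    have : xf (inl j) = (pq (inl j) : ℝ) := by
      have := hl; rw [hlam] at this; linarith [sub_eq_zero.mp this]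
    have hlt : ((pq (inl j) : ℕ) : ℝ) < 1 := by rw [← this]; exact hxf1 (inl j)
    have : pq (inl j) = 0 := by exact_mod_cast Nat.lt_one_iff.mp (by exact_mod_cast hlt)
    rw [‹xf (inl j) = (pq (inl j) : ℝ)›, this]; simp
  have hxr : ∀ j : Fin t, xf (inr j) = 0 := by
    intro j
    have hs := hrow j
    have : xf (inr j) = (pq (inr j) : ℝ) := by
      have h0 : xf (inl j) = (pq (inl j) : ℝ) := by
        have hl : lam j = 0 := congrFun hlam0 j
        rw [hlam] at hl; linarith [sub_eq_zero.mp hl]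
      rw [h0] at hs; linarith
    have hlt : ((pq (inr j) : ℕ) : ℝ) < 1 := by rw [← this]; exact hxf1 (inr j)
    have : pq (inr j) = 0 := by exact_mod_cast Nat.lt_one_iff.mp (by exact_mod_cast hlt)
    rw [‹xf (inr j) = (pq (inr j) : ℝ)›, this]; simp
  cases jj with
  | inl j =>
    refine ⟨⌊x (inl j)⌋, ?_⟩
    have := hxl j
    simp only [hxf, hfl, Sum.elim_inl] at this
    linarith
  | inr j =>
    refine ⟨⌊x (inr j)⌋, ?_⟩
    have := hxr j
    simp only [hxf, hfl, Sum.elim_inr] at this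
    linarith

end Helpers

/-- A matrix of Lawrence type is normal if and only if it is unimodular. -/
theorem lawrence_normal_iff_unimodular {s t : ℕ} (A : Matrix (Fin s) (Fin t) ℤ) :
    MNormal (lawrenceLift A) ↔ MUnimodular (lawrenceLift A) := by
  exact ⟨normal_to_unimod A, unimod_to_normal A⟩
end

section
/- For any simplicial complex C on [n] with d = (2,…,2), the 0/1 matrix A_C (in its full-rank face representation) contains a square submatrix of size equal to rank(A_C) with determinant 1; consequently ZA_C ∩ Z^d equals ZA_C where rows are restricted appropriately, i.e., the lattice generated by the columns of A_C is the full integer lattice of its row span. -/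
open Matrix

/-- Full-rank face representation of the binary hierarchical matrix of a simplicial complex:
rows indexed by faces, columns by binary `n`-tuples, entry `1` iff the tuple vanishes on
the face. -/
def faceMat {n : ℕ} (C : Finset (Finset (Fin n))) :
    Matrix {F // F ∈ C} (Fin n → Bool) ℝ :=
  Matrix.of fun F b => if ∀ v ∈ F.1, b v = false then 1 else 0


namespace FaceAux

variable {n : ℕ} {C : Finset (Finset (Fin n))}

def colOf (F : Finset (Fin n)) : Fin n → Bool := fun v => if v ∈ F then false else true

lemma colOf_eq_false_iff {F : Finset (Fin n)} {v : Fin n} : colOf F v = false ↔ v ∈ F := by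
  simp [colOf]

lemma colOf_injective : Function.Injective (colOf (n := n)) := by
  intro F G h
  ext v
  rw [← colOf_eq_false_iff, ← colOf_eq_false_iff, h]

def zetaM (R : Type*) [CommRing R] (C : Finset (Finset (Fin n))) :
    Matrix {F // F ∈ C} {F // F ∈ C} R :=
  Matrix.of fun F G => if F.1 ⊆ G.1 then 1 else 0

def key (F : {F // F ∈ C}) : Lex (ℕ × ℕ) := toLex (F.1.card, Encodable.encode F.1)

lemma key_injective : Function.Injective (key (n := n) (C := C)) := by
  intro F G h
  have := congrArg (fun p => (ofLex p).2) h
  exact Subtype.ext (Encodable.encode_injective this)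

lemma zetaM_det (R : Type*) [CommRing R] : (zetaM R C).det = 1 := by
  have htri : (zetaM R C).BlockTriangular key := by
    intro F G hk
    show (if F.1 ⊆ G.1 then (1 : R) else 0) = 0
    rw [if_neg]
    intro hsub
    rcases Prod.Lex.lt_iff.mp hk with h | ⟨h1, h2⟩
    · exact absurd (Finset.card_le_card hsub) (not_le.mpr h)
    · have hFG : F = G := Subtype.ext (Finset.eq_of_subset_of_card_le hsub (le_of_eq h1))
      subst hFG
      exact lt_irrefl _ h2
  classical
  rw [htri.det]
  refine Finset.prod_eq_one fun a ha => ?_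
  obtain ⟨i0, -, rfl⟩ := Finset.mem_image.mp ha
  haveI : Unique {i : {F // F ∈ C} // key i = key i0} :=
    ⟨⟨⟨i0, rfl⟩⟩, fun j => Subtype.ext (key_injective j.2)⟩
  rw [Matrix.det_unique]
  simp [Matrix.toSquareBlock_def, zetaM]

lemma faceMat_apply_colOf (F : {F // F ∈ C}) (G : Finset (Fin n)) :
    faceMat C F (colOf G) = if F.1 ⊆ G then 1 else 0 := by
  simp only [faceMat, Matrix.of_apply]
  refine if_congr ?_ rfl rfl
  constructor
  · intro h v hv; exact colOf_eq_false_iff.mp (h v hv)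
  · intro h v hv; exact colOf_eq_false_iff.mpr (h hv)

lemma submatrix_eq :
    (faceMat C).submatrix id (fun G : {F // F ∈ C} => colOf G.1) = zetaM ℝ C := by
  ext F G
  exact faceMat_apply_colOf F G.1

def faceMatZ (C : Finset (Finset (Fin n))) : Matrix {F // F ∈ C} (Fin n → Bool) ℤ :=
  Matrix.of fun F b => if ∀ v ∈ F.1, b v = false then 1 else 0

lemma faceMat_eq_map : faceMat C = (faceMatZ C).map (Int.cast : ℤ → ℝ) := by
  ext F b
  simp [faceMat, faceMatZ, apply_ite (Int.cast : ℤ → ℝ)]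

lemma faceMatZ_apply_colOf (F : {F // F ∈ C}) (G : Finset (Fin n)) :
    faceMatZ C F (colOf G) = if F.1 ⊆ G then 1 else 0 := by
  simp only [faceMatZ, Matrix.of_apply]
  refine if_congr ?_ rfl rfl
  constructor
  · intro h v hv; exact colOf_eq_false_iff.mp (h v hv)
  · intro h v hv; exact colOf_eq_false_iff.mpr (h hv)

lemma faceMatZ_mulVec_int (bz : {F // F ∈ C} → ℤ) :
    ∃ z : (Fin n → Bool) → ℤ, (faceMatZ C).mulVec z = bz := by
  classical
  have hdet : IsUnit (zetaM ℤ C).det := by rw [zetaM_det]; exact isUnit_one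
  set y : {F // F ∈ C} → ℤ := (zetaM ℤ C)⁻¹.mulVec bz with hy
  have hzy : (zetaM ℤ C).mulVec y = bz := by
    rw [hy, Matrix.mulVec_mulVec, Matrix.mul_nonsing_inv _ hdet, Matrix.one_mulVec]
  refine ⟨fun b => ∑ G : {F // F ∈ C}, if b = colOf G.1 then y G else 0, ?_⟩
  funext F
  rw [← hzy]
  show ∑ b, faceMatZ C F b * (∑ G, if b = colOf G.1 then y G else 0)
      = ∑ G, zetaM ℤ C F G * y G
  simp_rw [Finset.mul_sum]
  rw [Finset.sum_comm]
  refine Finset.sum_congr rfl fun G _ => ?_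
  have : ∀ b, faceMatZ C F b * (if b = colOf G.1 then y G else 0)
      = if b = colOf G.1 then faceMatZ C F b * y G else 0 := by
    intro b; split <;> simp
  simp_rw [this]
  rw [Finset.sum_ite_eq' Finset.univ (colOf G.1) (fun b => faceMatZ C F b * y G)]
  simp [faceMatZ_apply_colOf, zetaM]

end FaceAux

/-- For a simplicial complex `C` (given as the finset of all its faces, closed under taking
subsets and containing the empty face), the face matrix contains a maximal square submatrix
with determinant `1`; consequently, the lattice generated by its columns is the full integer
lattice of the column span. -/
theorem faceMat_unimodular_submatrix {n : ℕ} (C : Finset (Finset (Fin n)))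
    (hempty : ∅ ∈ C) (hdown : ∀ F ∈ C, ∀ G ⊆ F, G ∈ C) :
    (∃ cols : {F // F ∈ C} → (Fin n → Bool),
        Function.Injective cols ∧ ((faceMat C).submatrix id cols).det = 1) ∧
    (∀ b : {F // F ∈ C} → ℝ, b ∈ MZSpan (faceMat C) ↔
        (b ∈ Submodule.span ℝ (Set.range (faceMat C).transpose) ∧ ∀ i, ∃ z : ℤ, b i = z)) := by
  classical
  constructor
  · refine ⟨fun G => FaceAux.colOf G.1, fun a b h => Subtype.ext (FaceAux.colOf_injective h), ?_⟩
    rw [FaceAux.submatrix_eq, FaceAux.zetaM_det]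
  · intro b
    constructor
    · rintro ⟨z, rfl⟩
      constructor
      · have hsum : (faceMat C).mulVec (fun j => (z j : ℝ))
            = ∑ j, (z j : ℝ) • (faceMat C).transpose j := by
          funext i
          simp [Matrix.mulVec, dotProduct, Finset.sum_apply, Matrix.transpose_apply,
            mul_comm]
        rw [hsum]
        exact Submodule.sum_mem _ fun j _ =>
          Submodule.smul_mem _ _ (Submodule.subset_span ⟨j, rfl⟩)
      · intro i
        refine ⟨(FaceAux.faceMatZ C).mulVec z i, ?_⟩
        rw [FaceAux.faceMat_eq_map]
        exact (RingHom.map_mulVec (Int.castRingHom ℝ) (FaceAux.faceMatZ C) z i).symm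
    · rintro ⟨-, hint⟩
      choose bz hbz using hint
      obtain ⟨z, hz⟩ := FaceAux.faceMatZ_mulVec_int bz
      refine ⟨z, ?_⟩
      funext i
      rw [hbz i, FaceAux.faceMat_eq_map, ← hz]
      exact (RingHom.map_mulVec (Int.castRingHom ℝ) (FaceAux.faceMatZ C) z i).symm
end

section
/- Let A ∈ Z^{d×n} with columns a_1,…,a_n where the entries of a_n have no common divisor. Let A' consist of the first n−1 columns of P_{a_n}A (orthogonal projection along a_n). Then the toric ideal I_{A'} equals φ(I_A), where φ : K[x_1,…,x_n] → K[x_1,…,x_{n−1}] is the substitution homomorphism sending x_n to 1. -/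
open Matrix MvPolynomial

/-- The orthogonal projection matrix onto the hyperplane orthogonal to `v`. -/
noncomputable def projMat {r : ℕ} (v : Fin r → ℝ) : Matrix (Fin r) (Fin r) ℝ :=
  1 - (∑ i, v i * v i)⁻¹ • Matrix.vecMulVec v v

/-- The toric ideal of an integer matrix `A`: generated by the binomials `x^u - x^v`
with `Au = Av`. -/
noncomputable def toricIdeal (K : Type*) [Field K] {d n : ℕ} (A : Matrix (Fin d) (Fin n) ℤ) :
    Ideal (MvPolynomial (Fin n) K) :=
  Ideal.span {p | ∃ u v : Fin n →₀ ℕ,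
    A.mulVec (fun j => (u j : ℤ)) = A.mulVec (fun j => (v j : ℤ)) ∧
    p = monomial u 1 - monomial v 1}

/-- The toric ideal of a real matrix. -/
noncomputable def toricIdealR (K : Type*) [Field K] {d n : ℕ} (A : Matrix (Fin d) (Fin n) ℝ) :
    Ideal (MvPolynomial (Fin n) K) :=
  Ideal.span {p | ∃ u v : Fin n →₀ ℕ,
    A.mulVec (fun j => (u j : ℝ)) = A.mulVec (fun j => (v j : ℝ)) ∧
    p = monomial u 1 - monomial v 1}

section Aux

lemma projMat_mulVec {d : ℕ} (v z : Fin d → ℝ) :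
    (projMat v).mulVec z = z - ((∑ i, v i * v i)⁻¹ * (∑ i, v i * z i)) • v := by
  funext i
  simp only [projMat, Matrix.mulVec, dotProduct, Matrix.sub_apply, Matrix.one_apply,
    Matrix.smul_apply, Matrix.vecMulVec_apply, smul_eq_mul, Pi.sub_apply, Pi.smul_apply,
    sub_mul, ite_mul, one_mul, zero_mul, Finset.sum_sub_distrib, Finset.sum_ite_eq,
    Finset.mem_univ, if_true, Finset.mul_sum]
  congr 1
  rw [Finset.sum_mul]
  apply Finset.sum_congr rfl
  intro j _
  ring

lemma projMat_self {d : ℕ} (v : Fin d → ℝ) (h : (∑ i, v i * v i) ≠ 0) :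
    (projMat v).mulVec v = 0 := by
  rw [projMat_mulVec, inv_mul_cancel₀ h, one_smul, sub_self]

lemma exists_ratio {d : ℕ} (a z : Fin d → ℤ) (hgcd : Finset.univ.gcd a = 1)
    (hcross : ∀ i i' : Fin d, z i * a i' = z i' * a i) :
    ∃ t : ℤ, ∀ i, z i = t * a i := by
  have hne : ∃ i₀, a i₀ ≠ 0 := by
    by_contra h
    push_neg at h
    have : Finset.univ.gcd a = 0 := Finset.gcd_eq_zero_iff.2 fun i _ => h i
    rw [this] at hgcd; exact zero_ne_one hgcd
  obtain ⟨i₀, hi₀⟩ := hne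
  have hdvd : a i₀ ∣ z i₀ := by
    have h1 : a i₀ ∣ Finset.univ.gcd (fun i => z i₀ * a i) :=
      Finset.dvd_gcd fun i _ => ⟨z i, by rw [mul_comm (a i₀), ← hcross i₀ i]⟩
    rw [Finset.gcd_mul_left, hgcd, mul_one] at h1
    exact (dvd_normalize_iff).mp h1
  obtain ⟨t, ht⟩ := hdvd
  refine ⟨t, fun i => ?_⟩
  have h2 : z i * a i₀ = t * a i * a i₀ := by rw [hcross i i₀, ht]; ring
  exact mul_right_cancel₀ hi₀ h2

variable {m : ℕ}

noncomputable def restrictF (u : Fin (m+1) →₀ ℕ) : Fin m →₀ ℕ :=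
  Finsupp.equivFunOnFinite.symm fun j => u j.castSucc

noncomputable def extF (u : Fin m →₀ ℕ) (k : ℕ) : Fin (m+1) →₀ ℕ :=
  Finsupp.equivFunOnFinite.symm (Fin.snoc (u : Fin m → ℕ) k)

@[simp] lemma restrictF_apply (u : Fin (m+1) →₀ ℕ) (j : Fin m) :
    restrictF u j = u j.castSucc := rfl

@[simp] lemma extF_castSucc (u : Fin m →₀ ℕ) (k : ℕ) (j : Fin m) :
    extF u k j.castSucc = u j := by
  show Fin.snoc (α := fun _ => ℕ) (u : Fin m → ℕ) k j.castSucc = u j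
  simp

@[simp] lemma extF_last (u : Fin m →₀ ℕ) (k : ℕ) :
    extF u k (Fin.last m) = k := by
  show Fin.snoc (α := fun _ => ℕ) (u : Fin m → ℕ) k (Fin.last m) = k
  simp

lemma restrictF_extF (u : Fin m →₀ ℕ) (k : ℕ) : restrictF (extF u k) = u := by
  ext j; simp

lemma aeval_monomial_restrict (K : Type*) [Field K] (u : Fin (m+1) →₀ ℕ) :
    (aeval (R := K) fun i : Fin (m + 1) =>
        Fin.lastCases (1 : MvPolynomial (Fin m) K) (fun j => X j) i) (monomial u 1) =
      monomial (restrictF u) 1 := by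
  rw [aeval_monomial, monomial_eq]
  rw [Finsupp.prod_fintype _ _ (fun i => pow_zero _),
    Finsupp.prod_fintype _ _ (fun i => pow_zero _)]
  rw [Fin.prod_univ_castSucc]
  simp

lemma mulVec_castSucc_snoc {d : ℕ} (M : Matrix (Fin d) (Fin (m+1)) ℝ) (y : Fin m → ℝ) :
    (Matrix.of fun (i : Fin d) (j : Fin m) => M i j.castSucc).mulVec y
      = M.mulVec (Fin.snoc y 0) := by
  funext i
  simp [Matrix.mulVec, dotProduct, Fin.sum_univ_castSucc]

lemma castMulVec {d n : ℕ} (A : Matrix (Fin d) (Fin n) ℤ) (x : Fin n → ℤ) :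
    (A.map ((↑) : ℤ → ℝ)).mulVec (fun j => (x j : ℝ)) = fun i => ((A.mulVec x) i : ℝ) := by
  funext i
  simp [Matrix.mulVec, dotProduct, Matrix.map_apply]

end Aux

/-- If the entries of the last column of `A` have no common divisor and `A'` consists of the
first `n-1` columns of `P_{aₙ} A`, then `I_{A'} = φ(I_A)` where `φ` sends `xₙ` to `1`. -/
theorem toricIdeal_projection (K : Type*) [Field K] {d m : ℕ}
    (A : Matrix (Fin d) (Fin (m + 1)) ℤ)
    (hgcd : Finset.univ.gcd (fun i => A i (Fin.last m)) = 1) :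
    toricIdealR K (Matrix.of fun (i : Fin d) (j : Fin m) =>
        (projMat (fun i => (A i (Fin.last m) : ℝ)) * A.map ((↑) : ℤ → ℝ)) i j.castSucc) =
      Ideal.map (aeval (R := K) fun i : Fin (m + 1) =>
          Fin.lastCases (1 : MvPolynomial (Fin m) K) (fun j => X j) i)
        (toricIdeal K A) := by
  classical
  set a : Fin d → ℤ := fun i => A i (Fin.last m) with ha
  set aR : Fin d → ℝ := fun i => (a i : ℝ) with haR
  set Ar := A.map ((↑) : ℤ → ℝ) with hAr
  -- the last column of `a` is nonzero
  have hex : ∃ i, a i ≠ 0 := by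
    by_contra h
    push_neg at h
    have : Finset.univ.gcd a = 0 := Finset.gcd_eq_zero_iff.2 fun i _ => h i
    rw [this] at hgcd; exact zero_ne_one hgcd
  have hS : (∑ i, aR i * aR i) ≠ 0 := by
    obtain ⟨i₀, hi₀⟩ := hex
    have : (0:ℝ) < ∑ i, aR i * aR i := by
      apply Finset.sum_pos' (fun i _ => mul_self_nonneg _)
      refine ⟨i₀, Finset.mem_univ _, ?_⟩
      have : aR i₀ ≠ 0 := by simpa [haR] using hi₀
      exact mul_self_pos.mpr this
    exact ne_of_gt this
  have hPa : (projMat aR).mulVec aR = 0 := projMat_self aR hS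
  -- last column of Ar is aR
  have hcol : (fun i => Ar i (Fin.last m)) = aR := by
    funext i; simp [hAr, haR, ha, Matrix.map_apply]
  -- key computation
  have key : ∀ y : Fin m → ℝ,
      (Matrix.of fun (i : Fin d) (j : Fin m) =>
        (projMat aR * Ar) i j.castSucc).mulVec y
        = (projMat aR).mulVec (Ar.mulVec (Fin.snoc y 0)) := by
    intro y
    rw [mulVec_castSucc_snoc, ← Matrix.mulVec_mulVec]
  -- computing A ⬝ (snoc y k)
  have snocMul : ∀ (y : Fin m → ℤ) (k : ℤ) (i : Fin d),
      A.mulVec (Fin.snoc y k) i = A.mulVec (Fin.snoc y 0) i + k * a i := by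
    intro y k i
    simp [Matrix.mulVec, dotProduct, Fin.sum_univ_castSucc, ha]
    ring
  rw [toricIdeal, toricIdealR, Ideal.map_span]
  congr 1
  ext p
  simp only [Set.mem_setOf_eq, Set.mem_image]
  constructor
  · -- lift a generator of I_{A'}
    rintro ⟨u', v', h, rfl⟩
    rw [key, key] at h
    set yu : Fin m → ℤ := fun j => (u' j : ℤ) with hyu
    set yv : Fin m → ℤ := fun j => (v' j : ℤ) with hyv
    have hcastu : (Fin.snoc (fun j => ((u' j : ℕ) : ℝ)) 0 : Fin (m+1) → ℝ)
        = fun j => ((Fin.snoc yu 0 : Fin (m+1) → ℤ) j : ℝ) := by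
      funext j
      induction j using Fin.lastCases <;> simp [hyu]
    have hcastv : (Fin.snoc (fun j => ((v' j : ℕ) : ℝ)) 0 : Fin (m+1) → ℝ)
        = fun j => ((Fin.snoc yv 0 : Fin (m+1) → ℤ) j : ℝ) := by
      funext j
      induction j using Fin.lastCases <;> simp [hyv]
    rw [hcastu, hcastv, castMulVec, castMulVec] at h
    set zu := A.mulVec (Fin.snoc yu 0) with hzu
    set zv := A.mulVec (Fin.snoc yv 0) with hzv
    set z : Fin d → ℤ := fun i => zu i - zv i with hz
    have hz0 : (projMat aR).mulVec (fun i => (z i : ℝ)) = 0 := by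
      have : (fun i => ((z i : ℤ) : ℝ)) = (fun i => ((zu i : ℤ):ℝ)) - (fun i => ((zv i : ℤ):ℝ)) := by
        funext i; simp [hz]
      rw [this, Matrix.mulVec_sub, h, sub_self]
    rw [projMat_mulVec] at hz0
    have hzc : ∀ i, (z i : ℝ) =
        ((∑ i, aR i * aR i)⁻¹ * (∑ i, aR i * (z i : ℝ))) * aR i := by
      intro i
      have := congrFun hz0 i
      simp only [Pi.sub_apply, Pi.zero_apply, Pi.smul_apply, smul_eq_mul] at this
      linarith
    have hcross : ∀ i i' : Fin d, z i * a i' = z i' * a i := by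
      intro i i'
      have : (z i : ℝ) * aR i' = (z i' : ℝ) * aR i := by
        rw [hzc i, hzc i']; ring
      simp only [haR] at this
      exact_mod_cast this
    obtain ⟨t, ht⟩ := exists_ratio a z hgcd hcross
    set k₁ : ℕ := (-t).toNat with hk₁
    set k₂ : ℕ := t.toNat with hk₂
    have hk : (k₂ : ℤ) - (k₁ : ℤ) = t := by omega
    refine ⟨monomial (extF u' k₁) 1 - monomial (extF v' k₂) 1,
      ⟨extF u' k₁, extF v' k₂, ?_, rfl⟩, ?_⟩
    · funext i
      have e1 : (fun j => ((extF u' k₁ j : ℕ) : ℤ)) = (Fin.snoc yu (k₁:ℤ) : Fin (m+1) → ℤ) := by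
        funext j
        induction j using Fin.lastCases <;> simp [hyu]
      have e2 : (fun j => ((extF v' k₂ j : ℕ) : ℤ)) = (Fin.snoc yv (k₂:ℤ) : Fin (m+1) → ℤ) := by
        funext j
        induction j using Fin.lastCases <;> simp [hyv]
      rw [e1, e2, snocMul yu (k₁:ℤ) i, snocMul yv (k₂:ℤ) i]
      have hti : (A.mulVec (Fin.snoc yu 0)) i - (A.mulVec (Fin.snoc yv 0)) i = t * a i := ht i
      linear_combination hti - (a i) * hk
    · rw [map_sub, aeval_monomial_restrict, aeval_monomial_restrict,
        restrictF_extF, restrictF_extF]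
  · -- image of a generator of I_A
    rintro ⟨q, ⟨u, v, h, rfl⟩, rfl⟩
    refine ⟨restrictF u, restrictF v, ?_, by
      rw [map_sub, aeval_monomial_restrict, aeval_monomial_restrict]⟩
    rw [key, key]
    set yu : Fin m → ℤ := fun j => (u j.castSucc : ℤ) with hyu
    set yv : Fin m → ℤ := fun j => (v j.castSucc : ℤ) with hyv
    have hcastu : (Fin.snoc (fun j => ((restrictF u j : ℕ) : ℝ)) 0 : Fin (m+1) → ℝ)
        = fun j => ((Fin.snoc yu 0 : Fin (m+1) → ℤ) j : ℝ) := by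
      funext j
      induction j using Fin.lastCases <;> simp [hyu]
    have hcastv : (Fin.snoc (fun j => ((restrictF v j : ℕ) : ℝ)) 0 : Fin (m+1) → ℝ)
        = fun j => ((Fin.snoc yv 0 : Fin (m+1) → ℤ) j : ℝ) := by
      funext j
      induction j using Fin.lastCases <;> simp [hyv]
    rw [hcastu, hcastv, castMulVec, castMulVec]
    -- A ⬝ snoc yu 0 = A ⬝ uℤ - (u last) • a
    have eu : (fun j => ((u j : ℕ) : ℤ)) = (Fin.snoc yu ((u (Fin.last m) : ℤ)) : Fin (m+1) → ℤ) := by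
      funext j
      induction j using Fin.lastCases <;> simp [hyu]
    have ev : (fun j => ((v j : ℕ) : ℤ)) = (Fin.snoc yv ((v (Fin.last m) : ℤ)) : Fin (m+1) → ℤ) := by
      funext j
      induction j using Fin.lastCases <;> simp [hyv]
    rw [eu, ev] at h
    have keyP : ∀ (y : Fin m → ℤ) (k : ℤ),
        (projMat aR).mulVec (fun i => ((A.mulVec (Fin.snoc y 0)) i : ℝ))
          = (projMat aR).mulVec (fun i => ((A.mulVec (Fin.snoc y k)) i : ℝ)) := by
      intro y k
      have : (fun i => ((A.mulVec (Fin.snoc y k)) i : ℝ))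
          = (fun i => ((A.mulVec (Fin.snoc y 0)) i : ℝ)) + (k : ℝ) • aR := by
        funext i
        simp only [Pi.add_apply, Pi.smul_apply, smul_eq_mul, snocMul y k i, haR]
        push_cast
        ring
      rw [this, Matrix.mulVec_add, Matrix.mulVec_smul, hPa, smul_zero, add_zero]
    rw [keyP yu (u (Fin.last m)), keyP yv (v (Fin.last m)), h]
end

section
/- If A is normal and A' is obtained from A by deleting rows that are linearly dependent on the remaining rows (so that the row space is unchanged after composing with an injective linear map identifying the row spans), then A' is normal. Concretely: deleting a row of A that is a rational linear combination of the other rows preserves normality. -/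
open Matrix

/-- Deleting a row of `A` that is a rational linear combination of the other rows
preserves normality. -/
theorem normal_delete_dependent_row {d n : ℕ} (A : Matrix (Fin (d + 1)) (Fin n) ℚ)
    (r : Fin (d + 1)) (c : Fin (d + 1) → ℚ) (hc : c r = 0)
    (hdep : A r = ∑ i, c i • A i)
    (hA : MNormal (A.map ((↑) : ℚ → ℝ))) :
    MNormal ((A.submatrix (Fin.succAbove r) id).map ((↑) : ℚ → ℝ)) := by
  classical
  set B := A.map ((↑) : ℚ → ℝ) with hB
  have hBr : ∀ j, B r j = ∑ i, (c i : ℝ) * B i j := by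
    intro j
    have h := congrFun hdep j
    simp only [Finset.sum_apply, Pi.smul_apply, smul_eq_mul] at h
    simp only [hB, Matrix.map_apply]
    rw [h]
    push_cast
    rfl
  have hdepR : ∀ v : Fin n → ℝ, (B.mulVec v) r = ∑ i, (c i : ℝ) * (B.mulVec v) i := by
    intro v
    simp only [Matrix.mulVec, dotProduct]
    calc ∑ j, B r j * v j = ∑ j, (∑ i, (c i:ℝ) * B i j) * v j := by
          simp_rw [hBr]
      _ = ∑ i, (c i:ℝ) * ∑ j, B i j * v j := by
          simp_rw [Finset.sum_mul, Finset.mul_sum, mul_assoc]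
          exact Finset.sum_comm
  have hsub : (A.submatrix (Fin.succAbove r) id).map ((↑) : ℚ → ℝ)
      = B.submatrix (Fin.succAbove r) id := rfl
  rw [hsub]
  have hmul : ∀ (v : Fin n → ℝ) k,
      (B.submatrix (Fin.succAbove r) id).mulVec v k = B.mulVec v (r.succAbove k) := by
    intro v k
    simp [Matrix.mulVec, dotProduct, Matrix.submatrix_apply]
  have key : ∀ (u w : Fin n → ℝ),
      (∀ k, B.mulVec u (r.succAbove k) = B.mulVec w (r.succAbove k)) →
      B.mulVec u = B.mulVec w := by
    intro u w h
    funext i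
    rcases eq_or_ne i r with rfl | hne
    · rw [hdepR u, hdepR w]
      refine Finset.sum_congr rfl fun i' _ => ?_
      rcases eq_or_ne i' i with rfl | hne'
      · simp [hc]
      · obtain ⟨k, rfl⟩ := Fin.exists_succAbove_eq hne'
        rw [h k]
    · obtain ⟨k, rfl⟩ := Fin.exists_succAbove_eq hne
      exact h k
  ext b
  constructor
  · rintro ⟨⟨z, hz⟩, x, hx, hxb⟩
    have heq : B.mulVec (fun j => (z j : ℝ)) = B.mulVec x := by
      apply key
      intro k
      rw [← hmul, ← hmul, hz, hxb]
    have hmem : B.mulVec x ∈ MZSpan B ∩ MCone B := ⟨⟨z, heq⟩, ⟨x, hx, rfl⟩⟩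
    rw [hA] at hmem
    obtain ⟨y, hy⟩ := hmem
    exact ⟨y, by funext k; rw [hmul, hy, ← hmul, hxb]⟩
  · rintro ⟨y, hy⟩
    exact ⟨⟨fun j => (y j : ℤ), by push_cast; exact hy⟩,
      ⟨fun j => (y j : ℝ), fun j => by positivity, hy⟩⟩
end
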